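/- Let n, m ≥ 3 with n ≠ 4 and m ≠ 4. The commutator (derived) subgroup of W = S_n ≀ S_m equals the subgroup A_n ≀ Ã_m = {(f, σ) : sign σ = 1 and ∏ i, sign (f i) = 1}. -/

import Mathlib

/-- The automorphism of `Fin n → G` permuting coordinates by `σ`:
`(σ • f) i = f (σ⁻¹ i)`. -/
def permAut {n : ℕ} {G : Type*} [Group G] (σ : Equiv.Perm (Fin n)) :
    MulAut (Fin n → G) where
  toFun f i := f (σ⁻¹ i)
  invFun f i := f (σ i)
  left_inv f := funext fun i => by simp
  right_inv f := funext fun i => by simp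
  map_mul' f g := rfl

/-- The action of `Equiv.Perm (Fin n)` on `Fin n → G` by permuting coordinates,
as a homomorphism into the automorphism group. -/
def permHom (n : ℕ) (G : Type*) [Group G] :
    Equiv.Perm (Fin n) →* MulAut (Fin n → G) where
  toFun := permAut
  map_one' := rfl
  map_mul' _ _ := rfl

/-- The permutational wreath product `S_n ≀ S_m`, realized as the semidirect
product `(Fin n → Equiv.Perm (Fin m)) ⋊ Equiv.Perm (Fin n)`. -/
abbrev W (n m : ℕ) : Type :=
  SemidirectProduct (Fin n → Equiv.Perm (Fin m)) (Equiv.Perm (Fin n))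
    (permHom n (Equiv.Perm (Fin m)))

open Equiv Equiv.Perm Subgroup SemidirectProduct
open scoped commutatorElement

lemma permAut_apply {n : ℕ} {G : Type*} [Group G] (σ : Equiv.Perm (Fin n))
    (f : Fin n → G) (i : Fin n) : permAut σ f i = f (σ⁻¹ i) := rfl

lemma permHom_apply {n : ℕ} {G : Type*} [Group G] (σ : Equiv.Perm (Fin n))
    (f : Fin n → G) (i : Fin n) : permHom n G σ f i = f (σ⁻¹ i) := rfl

lemma map_mem_commutator' {G H : Type*} [Group G] [Group H] (f : G →* H) {x : G}
    (hx : x ∈ commutator G) : f x ∈ commutator H := by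
  have h : (commutator G).map f ≤ commutator H := by
    rw [commutator_def, Subgroup.map_commutator]
    exact Subgroup.commutator_mono le_top le_top
  exact h (Subgroup.mem_map_of_mem f hx)

lemma even_mem_commutator {k : ℕ} (hk : 3 ≤ k) {σ : Perm (Fin k)}
    (hσ : Equiv.Perm.sign σ = 1) : σ ∈ commutator (Perm (Fin k)) := by
  have hmem : σ ∈ alternatingGroup (Fin k) := Equiv.Perm.mem_alternatingGroup.2 hσ
  rw [← Equiv.Perm.closure_three_cycles_eq_alternating] at hmem
  refine (Subgroup.closure_le _).2 ?_ hmem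
  intro c hc
  simp only [Set.mem_setOf_eq] at hc
  set a : Fin k := ⟨0, by omega⟩
  set b : Fin k := ⟨1, by omega⟩
  set d : Fin k := ⟨2, by omega⟩
  have hab : a ≠ b := by simp [a, b, Fin.ext_iff]
  have had : a ≠ d := by simp [a, d, Fin.ext_iff]
  have hbd : b ≠ d := by simp [b, d, Fin.ext_iff]
  set x := Equiv.swap a b
  set y := Equiv.swap a d
  have h3 : IsThreeCycle (x * y) := isThreeCycle_swap_mul_swap_same hab had hbd
  have hw : ⁅x, y⁆ = (x * y) ^ 2 := by
    rw [commutatorElement_def]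
    simp [x, y, Equiv.swap_inv, pow_two, mul_assoc]
  have hw3 : Equiv.Perm.IsThreeCycle ⁅x, y⁆ := by
    rw [hw]
    have h1 : (x * y) ^ 2 = (x * y)⁻¹ := by
      have ho : (x * y) ^ 3 = 1 := by
        rw [← h3.orderOf, pow_orderOf_eq_one]
      rw [pow_succ] at ho
      exact eq_inv_of_mul_eq_one_left ho
    rw [h1]
    exact h3.inv
  have hconj : IsConj ⁅x, y⁆ c := Equiv.Perm.isConj_iff_cycleType_eq.2 (hw3.trans hc.symm)
  obtain ⟨g, hg⟩ := isConj_iff.1 hconj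
  rw [← hg]
  exact (Subgroup.commutator_normal ⊤ ⊤).conj_mem _
    (Subgroup.commutator_mem_commutator (Subgroup.mem_top x) (Subgroup.mem_top y)) g

/-- The sign homomorphism `W n m →* ℤˣ × ℤˣ`. -/
def signW (n m : ℕ) : W n m →* ℤˣ × ℤˣ where
  toFun w := (Equiv.Perm.sign w.right, ∏ i, Equiv.Perm.sign (w.left i))
  map_one' := by simp
  map_mul' a b := by
    refine Prod.ext (by simp) ?_
    simp only [mul_left, Pi.mul_apply, map_mul, Finset.prod_mul_distrib]
    congr 1
    exact Equiv.prod_comp (a.right⁻¹ : Equiv.Perm (Fin n))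
      (fun i => Equiv.Perm.sign (b.left i))

lemma pair_mem {n m : ℕ} {i j : Fin n} (hij : i ≠ j) (τ : Perm (Fin m)) :
    (SemidirectProduct.inl (Pi.mulSingle i τ * Pi.mulSingle j τ⁻¹) : W n m) ∈
      commutator (W n m) := by
  have key : (SemidirectProduct.inl (Pi.mulSingle i τ * Pi.mulSingle j τ⁻¹) : W n m)
      = ⁅(SemidirectProduct.inl (Pi.mulSingle i τ) : W n m),
          SemidirectProduct.inr (Equiv.swap i j)⁆ := by
    have hji : j ≠ i := hij.symm
    refine SemidirectProduct.ext (funext fun k => ?_) (by simp [commutatorElement_def])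
    simp only [commutatorElement_def, mul_left, mul_right, inv_left, inv_right, left_inl,
      right_inl, left_inr, right_inr, permHom_apply, Pi.mul_apply, Pi.inv_apply, map_one,
      MulAut.one_apply, one_mul, mul_one, inv_one, Equiv.Perm.one_apply, Equiv.swap_inv,
      Pi.one_apply]
    congr 1
    rcases eq_or_ne k i with rfl | hki
    · rw [Equiv.swap_apply_left, Pi.mulSingle_eq_of_ne hij, Pi.mulSingle_eq_of_ne hji, inv_one]
    · rcases eq_or_ne k j with rfl | hkj
      · rw [Equiv.swap_apply_right, Pi.mulSingle_eq_same, Pi.mulSingle_eq_same]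
      · rw [Equiv.swap_apply_of_ne_of_ne hki hkj, Pi.mulSingle_eq_of_ne hkj,
          Pi.mulSingle_eq_of_ne hki, inv_one]
  rw [key]
  exact Subgroup.commutator_mem_commutator (Subgroup.mem_top _) (Subgroup.mem_top _)

lemma allEven_mem {n m : ℕ} (hm : 3 ≤ m) (f : Fin n → Perm (Fin m))
    (hf : ∀ i, Equiv.Perm.sign (f i) = 1) :
    (SemidirectProduct.inl f : W n m) ∈ commutator (W n m) := by
  rw [← Finset.noncommProd_mulSingle f]
  erw [Finset.map_noncommProd]
  refine Subgroup.noncommProd_mem _ _ fun i _ => ?_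
  exact map_mem_commutator'
    ((SemidirectProduct.inl (φ := permHom n (Perm (Fin m)))).comp
      (MonoidHom.mulSingle (fun _ : Fin n => Perm (Fin m)) i))
    (even_mem_commutator hm (hf i))

lemma base_mem_aux {n m : ℕ} (hm : 3 ≤ m) :
    ∀ N : ℕ, ∀ f : Fin n → Perm (Fin m),
      (Finset.univ.filter fun i => Equiv.Perm.sign (f i) = -1).card = N → Even N →
      (SemidirectProduct.inl f : W n m) ∈ commutator (W n m) := by
  intro N
  induction N using Nat.strong_induction_on with
  | _ N ih =>
    intro f hcard heven
    rcases Nat.eq_zero_or_pos N with rfl | hpos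
    · refine allEven_mem hm f fun i => ?_
      have hni : i ∉ Finset.univ.filter fun i => Equiv.Perm.sign (f i) = -1 := by
        rw [Finset.card_eq_zero] at hcard
        simp [hcard]
      simp only [Finset.mem_filter, Finset.mem_univ, true_and] at hni
      rcases Int.units_eq_one_or (Equiv.Perm.sign (f i)) with h | h
      · exact h
      · exact absurd h hni
    · have h2 : 2 ≤ N := by rcases heven with ⟨r, rfl⟩; omega
      have h1 : 1 < (Finset.univ.filter fun i => Equiv.Perm.sign (f i) = -1).card := by omega
      obtain ⟨i, hi, j, hj, hij⟩ := Finset.one_lt_card.1 h1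
      simp only [Finset.mem_filter, Finset.mem_univ, true_and] at hi hj
      have h01 : (⟨0, by omega⟩ : Fin m) ≠ ⟨1, by omega⟩ := by simp [Fin.ext_iff]
      set s : Perm (Fin m) := Equiv.swap ⟨0, by omega⟩ ⟨1, by omega⟩ with hs
      have hsgn : Equiv.Perm.sign s = -1 := Equiv.Perm.sign_swap h01
      set δ : Fin n → Perm (Fin m) := Pi.mulSingle i s * Pi.mulSingle j s⁻¹ with hδ
      have hδi : δ i = s := by
        rw [hδ, Pi.mul_apply, Pi.mulSingle_eq_same, Pi.mulSingle_eq_of_ne hij, mul_one]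
      have hδj : δ j = s⁻¹ := by
        rw [hδ, Pi.mul_apply, Pi.mulSingle_eq_of_ne hij.symm, Pi.mulSingle_eq_same, one_mul]
      have hδk : ∀ k, k ≠ i → k ≠ j → δ k = 1 := fun k hki hkj => by
        rw [hδ, Pi.mul_apply, Pi.mulSingle_eq_of_ne hki, Pi.mulSingle_eq_of_ne hkj, one_mul]
      have hδmem : (SemidirectProduct.inl δ : W n m) ∈ commutator (W n m) := pair_mem hij s
      have hTset : (Finset.univ.filter fun k => Equiv.Perm.sign ((f * δ) k) = -1)
          = ((Finset.univ.filter fun k => Equiv.Perm.sign (f k) = -1).erase i).erase j := by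
        ext k
        simp only [Finset.mem_filter, Finset.mem_univ, true_and, Finset.mem_erase]
        rcases eq_or_ne k i with rfl | hki
        · refine iff_of_false ?_ (fun h => h.2.1 rfl)
          rw [Pi.mul_apply, hδi, map_mul, hi, hsgn]
          decide
        · rcases eq_or_ne k j with rfl | hkj
          · refine iff_of_false ?_ (fun h => h.1 rfl)
            rw [Pi.mul_apply, hδj, map_mul, hj, map_inv, hsgn]
            decide
          · rw [Pi.mul_apply, hδk k hki hkj, mul_one]
            tauto
      have hjT : j ∈ (Finset.univ.filter fun k => Equiv.Perm.sign (f k) = -1).erase i :=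
        Finset.mem_erase.2 ⟨hij.symm, Finset.mem_filter.2 ⟨Finset.mem_univ j, hj⟩⟩
      have hiT : i ∈ Finset.univ.filter fun k => Equiv.Perm.sign (f k) = -1 :=
        Finset.mem_filter.2 ⟨Finset.mem_univ i, hi⟩
      have hcardnew : (Finset.univ.filter fun k => Equiv.Perm.sign ((f * δ) k) = -1).card
          = N - 2 := by
        rw [hTset, Finset.card_erase_of_mem hjT, Finset.card_erase_of_mem hiT, hcard]
        omega
      have hfeq : (SemidirectProduct.inl f : W n m)
          = SemidirectProduct.inl (f * δ) * (SemidirectProduct.inl δ)⁻¹ := by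
        rw [← map_inv, ← map_mul, mul_inv_cancel_right]
      rw [hfeq]
      refine mul_mem (ih (N - 2) (by omega) (f * δ) hcardnew ?_) (inv_mem hδmem)
      obtain ⟨r, rfl⟩ := heven
      exact ⟨r - 1, by omega⟩

/-- The commutator subgroup of `W = S_n ≀ S_m` equals `A_n ≀ Ã_m`. -/
theorem stmt11 (n m : ℕ) (hn : 3 ≤ n) (hm : 3 ≤ m) (hn4 : n ≠ 4) (hm4 : m ≠ 4) :
    (commutator (W n m) : Set (W n m)) =
      {w : W n m | Equiv.Perm.sign w.right = 1 ∧
        ∏ i, Equiv.Perm.sign (w.left i) = 1} := by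
  ext w
  simp only [SetLike.mem_coe, Set.mem_setOf_eq]
  constructor
  · intro hw
    have h := Abelianization.commutator_subset_ker (signW n m) hw
    rw [MonoidHom.mem_ker] at h
    exact ⟨congrArg Prod.fst h, congrArg Prod.snd h⟩
  · rintro ⟨h1, h2⟩
    rw [← SemidirectProduct.inl_left_mul_inr_right w]
    have key : ((-1 : ℤˣ)) ^
        (Finset.univ.filter fun i => Equiv.Perm.sign (w.left i) = -1).card = 1 := by
      calc ((-1 : ℤˣ)) ^ (Finset.univ.filter fun i => Equiv.Perm.sign (w.left i) = -1).card
          = ∏ _i ∈ (Finset.univ.filter fun i => Equiv.Perm.sign (w.left i) = -1), (-1 : ℤˣ) :=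
            (Finset.prod_const _).symm
        _ = ∏ i, (if Equiv.Perm.sign (w.left i) = -1 then (-1 : ℤˣ) else 1) :=
            Finset.prod_filter _ _
        _ = ∏ i, Equiv.Perm.sign (w.left i) := by
            refine Finset.prod_congr rfl fun i _ => ?_
            rcases Int.units_eq_one_or (Equiv.Perm.sign (w.left i)) with h | h
            · rw [h, if_neg (by decide)]
            · rw [h, if_pos rfl]
        _ = 1 := h2
    have heven : Even (Finset.univ.filter fun i => Equiv.Perm.sign (w.left i) = -1).card := by
      rcases Nat.even_or_odd
        (Finset.univ.filter fun i => Equiv.Perm.sign (w.left i) = -1).card with h | h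
      · exact h
      · rw [h.neg_one_pow] at key
        exact absurd key (by decide)
    exact mul_mem (base_mem_aux hm _ w.left rfl heven)
      (map_mem_commutator' SemidirectProduct.inr (even_mem_commutator hn h1))
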